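/- Let A be a small category and W an accessible A-localizer, giving a model structure on presheaves on A with cofibrations the monomorphisms and weak equivalences W. Then W is closed under binary products if and only if the class of monomorphisms belonging to W is closed under binary products, if and only if the pushout-product of a cofibration with a trivial cofibration is a trivial cofibration (i.e., the model structure is cartesian). -/

import Mathlib

open CategoryTheory CategoryTheory.Limits

universe w v u

namespace Paper

variable {M : Type u} [Category.{v} M]

/-- The class of morphisms with the left lifting property with respect to every morphism in `C`. -/
def llp (C : MorphismProperty M) : MorphismProperty M :=
  fun _ _ i => ∀ ⦃Z T : M⦄ (p : Z ⟶ T), C p → HasLiftingProperty i p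

/-- The class of morphisms with the right lifting property with respect to every morphism in `C`. -/
def rlp (C : MorphismProperty M) : MorphismProperty M :=
  fun _ _ p => ∀ ⦃U V : M⦄ (i : U ⟶ V), C i → HasLiftingProperty i p

/-- Stability under retracts (in the arrow category). -/
def StableUnderRetracts (P : MorphismProperty M) : Prop :=
  ∀ ⦃X Y X' Y' : M⦄ (f : X ⟶ Y) (f' : X' ⟶ Y')
    (i : Arrow.mk f' ⟶ Arrow.mk f) (r : Arrow.mk f ⟶ Arrow.mk f'),
      i ≫ r = 𝟙 _ → P f → P f'

/-- The restriction of a transfinite sequence to the indices below `b`. -/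
def restrictionLT {β : Type w} [Preorder β] (F : β ⥤ M) (b : β) : {i : β // i < b} ⥤ M :=
  (Monotone.functor (f := fun i : {i : β // i < b} => (i : β)) fun _ _ h => h) ⋙ F

/-- The cocone over the restriction of `F` to indices `< b`, with apex `F.obj b`. -/
@[simps]
def coconeLT {β : Type w} [Preorder β] (F : β ⥤ M) (b : β) :
    Cocone (restrictionLT F b) where
  pt := F.obj b
  ι :=
    { app := fun i => F.map (homOfLE i.2.le)
      naturality := fun i j g => by
        dsimp [restrictionLT, Monotone.functor]
        rw [Category.comp_id, ← F.map_comp]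
        congr 1 }

/-- A class of morphisms is stable under transfinite composition if, for every
well-ordered continuous sequence whose successor maps lie in `P`, the canonical map from the
first object to a colimit of the sequence lies in `P`. -/
def StableUnderTransfiniteComposition (P : MorphismProperty M) : Prop :=
  ∀ (β : Type w) (_ : LinearOrder β) (_ : OrderBot β) (_ : SuccOrder β)
    (_ : WellFoundedLT β) (F : β ⥤ M),
    (∀ b : β, Order.IsSuccLimit b → Nonempty (IsColimit (coconeLT F b))) →
    (∀ b : β, ¬IsMax b → P (F.map (homOfLE (Order.le_succ b)))) →
    ∀ (c : Cocone F), IsColimit c → P (c.ι.app ⊥)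

/-- Trivial fibrations: morphisms with the right lifting property with respect to all
monomorphisms. -/
def IsTrivFib {X Y : M} (f : X ⟶ Y) : Prop :=
  ∀ ⦃U V : M⦄ (i : U ⟶ V), Mono i → HasLiftingProperty i f

end Paper

namespace Paper

open CategoryTheory CategoryTheory.Limits

/-- An `A`-localizer: a class of morphisms of presheaves on `A` satisfying 2-out-of-3,
containing the trivial fibrations, and whose monomorphism members are stable under
pushout and transfinite composition. -/
structure IsLocalizer {A : Type} [SmallCategory A] (W : MorphismProperty (Aᵒᵖ ⥤ Type)) :
    Prop where
  two_out_of_three : W.HasTwoOutOfThreeProperty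
  trivFib_mem : ∀ ⦃X Y : Aᵒᵖ ⥤ Type⦄ (f : X ⟶ Y), IsTrivFib f → W f
  pushout_stable : ∀ ⦃Z X Y P : Aᵒᵖ ⥤ Type⦄ (s : Z ⟶ X) (f : Z ⟶ Y) (f' : X ⟶ P) (t : Y ⟶ P),
    IsPushout s f f' t → Mono f → W f → W f'
  transfinite_stable :
    StableUnderTransfiniteComposition.{0} (MorphismProperty.monomorphisms _ ⊓ W)

/-- A model category structure on a category `M`: classes of weak equivalences,
cofibrations and fibrations satisfying Quillen's axioms. -/
structure ModelStruct (M : Type u) [Category.{v} M] where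
  W : MorphismProperty M
  Cof : MorphismProperty M
  Fib : MorphismProperty M
  w_two_out_of_three : W.HasTwoOutOfThreeProperty
  w_retract : StableUnderRetracts W
  cof_retract : StableUnderRetracts Cof
  fib_retract : StableUnderRetracts Fib
  lift_trivCof_fib : ∀ ⦃U V X Y : M⦄ (i : U ⟶ V) (p : X ⟶ Y),
    Cof i → W i → Fib p → HasLiftingProperty i p
  lift_cof_trivFib : ∀ ⦃U V X Y : M⦄ (i : U ⟶ V) (p : X ⟶ Y),
    Cof i → Fib p → W p → HasLiftingProperty i p
  fact_trivCof_fib : ∀ ⦃X Y : M⦄ (f : X ⟶ Y),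
    ∃ (Z : M) (i : X ⟶ Z) (p : Z ⟶ Y), Cof i ∧ W i ∧ Fib p ∧ i ≫ p = f
  fact_cof_trivFib : ∀ ⦃X Y : M⦄ (f : X ⟶ Y),
    ∃ (Z : M) (i : X ⟶ Z) (p : Z ⟶ Y), Cof i ∧ Fib p ∧ W p ∧ i ≫ p = f

/-- An object is fibrant if its map to the terminal object is a fibration. -/
def ModelStruct.Fibrant {M : Type u} [Category.{v} M] [HasTerminal M]
    (σ : ModelStruct M) (X : M) : Prop :=
  σ.Fib (terminal.from X)

/-- The statement that an accessible localizer `W` underlies a (cofibrantly generated) model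
structure on presheaves whose cofibrations are the monomorphisms; by a theorem of Cisinski
this is equivalent to accessibility of `W`. -/
def IsAccessibleLocalizer {A : Type} [SmallCategory A]
    (W : MorphismProperty (Aᵒᵖ ⥤ Type)) : Prop :=
  IsLocalizer W ∧
    ∃ σ : ModelStruct (Aᵒᵖ ⥤ Type), σ.W = W ∧ σ.Cof = MorphismProperty.monomorphisms _

end Paper

namespace Paper

open CategoryTheory CategoryTheory.Limits

variable {A : Type} [SmallCategory A]

/-- The pushout-product (corner map) `U × T ⊔_{U × S} V × S ⟶ V × T` of two morphisms of
presheaves. -/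
noncomputable def prodCorner {U V S T : Aᵒᵖ ⥤ Type} (u : U ⟶ V) (v : S ⟶ T) :
    pushout (prod.map (𝟙 U) v) (prod.map u (𝟙 S)) ⟶ V ⨯ T :=
  pushout.desc (prod.map u (𝟙 T)) (prod.map (𝟙 V) v)
    (by rw [prod.map_map, prod.map_map]; simp)

end Paper

namespace Paper

open CategoryTheory CategoryTheory.Limits

universe z

section AuxGeneral

lemma mono_prod_map {C : Type u} [Category.{v} C] [HasBinaryProducts C] {X Y X' Y' : C}
    (f : X ⟶ Y) (g : X' ⟶ Y') [Mono f] [Mono g] : Mono (prod.map f g) := by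
  constructor
  intro Z a b h
  apply Limits.prod.hom_ext
  · rw [← cancel_mono f]
    simpa using h =≫ prod.fst
  · rw [← cancel_mono g]
    simpa using h =≫ prod.snd

lemma isPullback_prod_map {C : Type u} [Category.{v} C] [HasBinaryProducts C]
    {U V S T : C} (u : U ⟶ V) (v : S ⟶ T) :
    IsPullback (prod.map (𝟙 U) v) (prod.map u (𝟙 S)) (prod.map u (𝟙 T)) (prod.map (𝟙 V) v) := by
  have w : prod.map (𝟙 U) v ≫ prod.map u (𝟙 T) = prod.map u (𝟙 S) ≫ prod.map (𝟙 V) v := by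
    simp [prod.map_map]
  refine IsPullback.of_isLimit' ⟨w⟩ ?_
  refine PullbackCone.IsLimit.mk w
    (fun c => prod.lift (c.fst ≫ prod.fst) (c.snd ≫ prod.snd)) (fun c => ?_) (fun c => ?_)
    (fun c m h₁ h₂ => ?_)
  · have h2 : c.fst ≫ prod.snd = c.snd ≫ prod.snd ≫ v := by simpa using c.condition =≫ prod.snd
    apply Limits.prod.hom_ext <;> simp [h2, prod.lift_fst, prod.lift_snd]
  · have h1 : (c.fst ≫ prod.fst) ≫ u = c.snd ≫ prod.fst := by simpa using c.condition =≫ prod.fst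
    apply Limits.prod.hom_ext <;> simp [h1, prod.lift_fst, prod.lift_snd]
  · apply Limits.prod.hom_ext
    · simpa [prod.lift_fst] using h₁ =≫ prod.fst
    · simpa [prod.lift_snd] using h₂ =≫ prod.snd

lemma type_corner_mono {Z B₁ B₂ Y P : Type z}
    {s : Z ⟶ B₁} {t : Z ⟶ B₂} {m₁ : B₁ ⟶ Y} {m₂ : B₂ ⟶ Y}
    {i₁ : B₁ ⟶ P} {i₂ : B₂ ⟶ P} {d : P ⟶ Y}
    (hpb : IsPullback s t m₁ m₂) (hpo : IsPushout s t i₁ i₂)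
    (hm₁ : Mono m₁) (hm₂ : Mono m₂)
    (h₁ : i₁ ≫ d = m₁) (h₂ : i₂ ≫ d = m₂) : Mono d := by
  have inj₁ : Function.Injective m₁ := (mono_iff_injective m₁).1 hm₁
  have inj₂ : Function.Injective m₂ := (mono_iff_injective m₂).1 hm₂
  have hw : ∀ x, m₁ (s x) = m₂ (t x) := fun x => types_congr_hom hpb.w x
  have key : ∀ b₁ b₂, m₁ b₁ = m₂ b₂ → ∃ x, s x = b₁ ∧ t x = b₂ := by
    intro b₁ b₂ h
    have w : TypeCat.ofHom (fun _ : PUnit.{z+1} => b₁) ≫ m₁ = TypeCat.ofHom (fun _ => b₂) ≫ m₂ := by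
      ext; exact h
    exact ⟨hpb.lift _ _ w PUnit.unit, types_congr_hom (hpb.lift_fst _ _ w) _,
      types_congr_hom (hpb.lift_snd _ _ w) _⟩
  have sinj : Function.Injective s := by
    intro x x' h
    have ht : t x = t x' := inj₂ (by rw [← hw x, ← hw x', h])
    have := hpb.hom_ext (k := TypeCat.ofHom fun _ : PUnit.{z+1} => x) (l := TypeCat.ofHom fun _ => x')
      (by ext; exact h) (by ext; exact ht)
    exact types_congr_hom this PUnit.unit
  haveI : Mono s := (mono_iff_injective s).2 sinj
  let q : Types.Pushout s t ⟶ Y := TypeCat.ofHom (Quot.lift (r := Types.Pushout.Rel s t) (Sum.elim m₁ m₂)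
    (by rintro _ _ ⟨x⟩; exact hw x))
  have qinj : Function.Injective q := by
    intro x y hab
    obtain ⟨a⟩ := x
    obtain ⟨b⟩ := y
    refine (Types.Pushout.quot_mk_eq_iff s t a b).2 ?_
    obtain b₁ | b₂ := a <;> obtain c₁ | c₂ := b
    · obtain rfl : b₁ = c₁ := inj₁ hab
      exact Types.Pushout.Rel'.refl _
    · obtain ⟨x, hx₁, hx₂⟩ := key _ _ hab
      rw [Types.Pushout.inl_rel'_inr_iff]
      exact ⟨x, hx₁.symm, hx₂.symm⟩
    · obtain ⟨x, hx₁, hx₂⟩ := key _ _ hab.symm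
      exact Types.Pushout.Rel'.symm
        ((Types.Pushout.inl_rel'_inr_iff s t c₁ b₂).2 ⟨x, hx₁.symm, hx₂.symm⟩)
    · obtain rfl : b₂ = c₂ := inj₂ hab
      exact Types.Pushout.Rel'.refl _
  let e : P ≅ Types.Pushout s t :=
    hpo.isColimit.coconePointUniqueUpToIso (Types.Pushout.isColimitCocone s t)
  have he₁ : i₁ ≫ e.hom = Types.Pushout.inl s t := by
    have := hpo.isColimit.comp_coconePointUniqueUpToIso_hom
      (Types.Pushout.isColimitCocone s t) WalkingSpan.left
    simp at this; exact this
  have he₂ : i₂ ≫ e.hom = Types.Pushout.inr s t := by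
    have := hpo.isColimit.comp_coconePointUniqueUpToIso_hom
      (Types.Pushout.isColimitCocone s t) WalkingSpan.right
    simp at this; exact this
  have hd : d = e.hom ≫ q := by
    apply PushoutCocone.IsColimit.hom_ext hpo.isColimit
    · show i₁ ≫ d = i₁ ≫ e.hom ≫ q
      rw [h₁, ← Category.assoc, he₁]
      rfl
    · show i₂ ≫ d = i₂ ≫ e.hom ≫ q
      rw [h₂, ← Category.assoc, he₂]
      rfl
  haveI : Mono q := (mono_iff_injective q).2 qinj
  rw [hd]
  exact mono_comp _ _

end AuxGeneral

section AuxPresheaf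

variable {A : Type} [SmallCategory A]

lemma presheaf_corner_mono {Z B₁ B₂ Y P : Aᵒᵖ ⥤ Type}
    {s : Z ⟶ B₁} {t : Z ⟶ B₂} {m₁ : B₁ ⟶ Y} {m₂ : B₂ ⟶ Y}
    {i₁ : B₁ ⟶ P} {i₂ : B₂ ⟶ P} {d : P ⟶ Y}
    (hpb : IsPullback s t m₁ m₂) (hpo : IsPushout s t i₁ i₂)
    (hm₁ : Mono m₁) (hm₂ : Mono m₂)
    (h₁ : i₁ ≫ d = m₁) (h₂ : i₂ ≫ d = m₂) : Mono d := by
  rw [NatTrans.mono_iff_mono_app']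
  intro a
  have hpb' := hpb.map ((evaluation Aᵒᵖ Type).obj a)
  have hpo' := hpo.map ((evaluation Aᵒᵖ Type).obj a)
  simp only [evaluation_obj_map] at hpb' hpo'
  refine type_corner_mono hpb' hpo'
    ((NatTrans.mono_iff_mono_app' Type m₁).1 hm₁ a)
    ((NatTrans.mono_iff_mono_app' Type m₂).1 hm₂ a) ?_ ?_
  · rw [← h₁]; rfl
  · rw [← h₂]; rfl

lemma isTrivFib_prod_map {X Y X' Y' : Aᵒᵖ ⥤ Type} {p : X ⟶ Y} {q : X' ⟶ Y'}
    (hp : IsTrivFib p) (hq : IsTrivFib q) : IsTrivFib (prod.map p q) := by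
  intro U V i hi
  haveI := hp i hi
  haveI := hq i hi
  constructor
  intro f g sq
  have sq₁ : CommSq (f ≫ prod.fst) i p (g ≫ prod.fst) := ⟨by
    have := sq.w =≫ prod.fst
    simpa using this⟩
  have sq₂ : CommSq (f ≫ prod.snd) i q (g ≫ prod.snd) := ⟨by
    have := sq.w =≫ prod.snd
    simpa using this⟩
  exact ⟨⟨{ l := prod.lift sq₁.lift sq₂.lift
            fac_left := by
              apply Limits.prod.hom_ext <;> simp [prod.lift_fst, prod.lift_snd]
            fac_right := by
              apply Limits.prod.hom_ext <;> simp [prod.lift_fst, prod.lift_snd] }⟩⟩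

variable {W : MorphismProperty (Aᵒᵖ ⥤ Type)}

lemma IsLocalizer.W_of_isIso (hL : IsLocalizer W) {X Y : Aᵒᵖ ⥤ Type} (e : X ⟶ Y) [IsIso e] :
    W e :=
  hL.trivFib_mem e fun _ _ _ _ => inferInstance

lemma IsLocalizer.unit_left (hL : IsLocalizer W)
    (hc : ∀ ⦃U V S T : Aᵒᵖ ⥤ Type⦄ (u : U ⟶ V) (v : S ⟶ T),
        Mono u → Mono v → W v → Mono (prodCorner u v) ∧ W (prodCorner u v))
    {S T : Aᵒᵖ ⥤ Type} (v : S ⟶ T) (hm : Mono v) (hv : W v) (X : Aᵒᵖ ⥤ Type) :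
    W (prod.map (𝟙 X) v) := by
  haveI := hL.two_out_of_three
  have hcor := hc (initial.to X) v inferInstance hm hv
  haveI : IsIso (prod.map (𝟙 (⊥_ (Aᵒᵖ ⥤ Type))) v) := by
    have h1 : IsIso (prod.map (𝟙 (⊥_ (Aᵒᵖ ⥤ Type))) v ≫ (prod.fst : (⊥_ _) ⨯ T ⟶ _)) := by
      rw [prod.map_fst]
      infer_instance
    exact IsIso.of_isIso_comp_right _ prod.fst
  haveI : IsIso (pushout.inr (prod.map (𝟙 (⊥_ (Aᵒᵖ ⥤ Type))) v)
      (prod.map (initial.to X) (𝟙 S))) := by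
    refine ⟨⟨pushout.desc (inv (prod.map (𝟙 (⊥_ (Aᵒᵖ ⥤ Type))) v) ≫
      prod.map (initial.to X) (𝟙 S)) (𝟙 _) (by simp), ?_, ?_⟩⟩
    · simp [pushout.inr_desc]
    · apply pushout.hom_ext
      · rw [pushout.inl_desc_assoc, Category.comp_id, Category.assoc, ← pushout.condition,
          IsIso.inv_hom_id_assoc]
      · rw [pushout.inr_desc_assoc, Category.comp_id, Category.id_comp]
  have hfac : pushout.inr _ _ ≫ prodCorner (initial.to X) v = prod.map (𝟙 X) v := by
    simp [prodCorner, pushout.inl_desc, pushout.inr_desc]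
  rw [← hfac]
  exact W.comp_mem _ _ (hL.W_of_isIso _) hcor.2

lemma IsLocalizer.unit_right (hL : IsLocalizer W)
    (hc : ∀ ⦃U V S T : Aᵒᵖ ⥤ Type⦄ (u : U ⟶ V) (v : S ⟶ T),
        Mono u → Mono v → W v → Mono (prodCorner u v) ∧ W (prodCorner u v))
    {S T : Aᵒᵖ ⥤ Type} (v : S ⟶ T) (hm : Mono v) (hv : W v) (X : Aᵒᵖ ⥤ Type) :
    W (prod.map v (𝟙 X)) := by
  haveI := hL.two_out_of_three
  have hbraid : prod.map v (𝟙 X) =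
      (Limits.prod.braiding S X).hom ≫ prod.map (𝟙 X) v ≫ (Limits.prod.braiding X T).hom := by
    apply Limits.prod.hom_ext <;> simp [prod.lift_fst, prod.lift_snd, prod.lift_fst_assoc, prod.lift_snd_assoc]
  rw [hbraid]
  exact W.comp_mem _ _ (hL.W_of_isIso _)
    (W.comp_mem _ _ (hL.unit_left hc v hm hv X) (hL.W_of_isIso _))

end AuxPresheaf

end Paper

open Paper CategoryTheory CategoryTheory.Limits in
/-- For an accessible `A`-localizer `W`, the following are equivalent: `W` is closed under
binary products; monomorphisms belonging to `W` are closed under binary products; the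
pushout-product of a cofibration (monomorphism) with a trivial cofibration (monomorphism in
`W`) is again a trivial cofibration (the model structure is cartesian). -/
theorem stmt3 {A : Type} [SmallCategory A] (W : MorphismProperty (Aᵒᵖ ⥤ Type))
    (hW : IsAccessibleLocalizer W) :
    ((∀ ⦃X Y X' Y' : Aᵒᵖ ⥤ Type⦄ (f : X ⟶ Y) (g : X' ⟶ Y'),
        W f → W g → W (prod.map f g)) ↔
      (∀ ⦃X Y X' Y' : Aᵒᵖ ⥤ Type⦄ (f : X ⟶ Y) (g : X' ⟶ Y'),
        Mono f → W f → Mono g → W g → W (prod.map f g))) ∧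
    ((∀ ⦃X Y X' Y' : Aᵒᵖ ⥤ Type⦄ (f : X ⟶ Y) (g : X' ⟶ Y'),
        Mono f → W f → Mono g → W g → W (prod.map f g)) ↔
      (∀ ⦃U V S T : Aᵒᵖ ⥤ Type⦄ (u : U ⟶ V) (v : S ⟶ T),
        Mono u → Mono v → W v → Mono (prodCorner u v) ∧ W (prodCorner u v))) := by
  obtain ⟨hL, σ, hσW, hσCof⟩ := hW
  haveI := hL.two_out_of_three
  have h21 : (∀ ⦃X Y X' Y' : Aᵒᵖ ⥤ Type⦄ (f : X ⟶ Y) (g : X' ⟶ Y'),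
      Mono f → W f → Mono g → W g → W (prod.map f g)) →
      ∀ ⦃X Y X' Y' : Aᵒᵖ ⥤ Type⦄ (f : X ⟶ Y) (g : X' ⟶ Y'),
      W f → W g → W (prod.map f g) := by
    intro h2 X Y X' Y' f g hf hg
    obtain ⟨Zf, i, p, hci, hfp, hwp, hip⟩ := σ.fact_cof_trivFib f
    obtain ⟨Zg, j, q, hcj, hfq, hwq, hjq⟩ := σ.fact_cof_trivFib g
    have hWp : W p := by rw [← hσW]; exact hwp
    have hWq : W q := by rw [← hσW]; exact hwq
    have hWi : W i := W.of_postcomp i p hWp (by rw [hip]; exact hf)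
    have hWj : W j := W.of_postcomp j q hWq (by rw [hjq]; exact hg)
    have hMi : Mono i := by rw [hσCof] at hci; exact hci
    have hMj : Mono j := by rw [hσCof] at hcj; exact hcj
    have hTp : IsTrivFib p := fun U V k hk =>
      σ.lift_cof_trivFib k p (by rw [hσCof]; exact hk) hfp hwp
    have hTq : IsTrivFib q := fun U V k hk =>
      σ.lift_cof_trivFib k q (by rw [hσCof]; exact hk) hfq hwq
    have hWpq : W (prod.map p q) := hL.trivFib_mem _ (isTrivFib_prod_map hTp hTq)
    have hfact : prod.map f g = prod.map i j ≫ prod.map p q := by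
      rw [prod.map_map, hip, hjq]
    rw [hfact]
    exact W.comp_mem _ _ (h2 i j hMi hWi hMj hWj) hWpq
  have h23 : (∀ ⦃X Y X' Y' : Aᵒᵖ ⥤ Type⦄ (f : X ⟶ Y) (g : X' ⟶ Y'),
      Mono f → W f → Mono g → W g → W (prod.map f g)) →
      ∀ ⦃U V S T : Aᵒᵖ ⥤ Type⦄ (u : U ⟶ V) (v : S ⟶ T),
      Mono u → Mono v → W v → Mono (prodCorner u v) ∧ W (prodCorner u v) := by
    intro h2 U V S T u v hu hv hWv
    haveI := hu
    haveI := hv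
    have hpo := IsPushout.of_hasPushout (prod.map (𝟙 U) v) (prod.map u (𝟙 S))
    constructor
    · exact presheaf_corner_mono (isPullback_prod_map u v) hpo
        (mono_prod_map u (𝟙 T)) (mono_prod_map (𝟙 V) v)
        (by simp [prodCorner, pushout.inl_desc, pushout.inr_desc]) (by simp [prodCorner, pushout.inl_desc, pushout.inr_desc])
    · have hWs : W (prod.map (𝟙 U) v) := h2 (𝟙 U) v inferInstance (hL.W_of_isIso _) hv hWv
      have hMs : Mono (prod.map (𝟙 U) v) := mono_prod_map _ _
      have hWinr : W (pushout.inr (prod.map (𝟙 U) v) (prod.map u (𝟙 S))) :=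
        hL.pushout_stable _ _ _ _ hpo.flip hMs hWs
      have hfac : pushout.inr _ _ ≫ prodCorner u v = prod.map (𝟙 V) v := by
        simp [prodCorner, pushout.inl_desc, pushout.inr_desc]
      exact W.of_precomp _ _ hWinr
        (by rw [hfac]; exact h2 (𝟙 V) v inferInstance (hL.W_of_isIso _) hv hWv)
  have h32 : (∀ ⦃U V S T : Aᵒᵖ ⥤ Type⦄ (u : U ⟶ V) (v : S ⟶ T),
      Mono u → Mono v → W v → Mono (prodCorner u v) ∧ W (prodCorner u v)) →
      ∀ ⦃X Y X' Y' : Aᵒᵖ ⥤ Type⦄ (f : X ⟶ Y) (g : X' ⟶ Y'),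
      Mono f → W f → Mono g → W g → W (prod.map f g) := by
    intro h3 X Y X' Y' f g hmf hWf hmg hWg
    have h1 : W (prod.map (𝟙 X) g) := hL.unit_left h3 g hmg hWg X
    have h2' : W (prod.map f (𝟙 Y')) := hL.unit_right h3 f hmf hWf Y'
    have hfact : prod.map f g = prod.map (𝟙 X) g ≫ prod.map f (𝟙 Y') := by
      rw [prod.map_map, Category.id_comp, Category.comp_id]
    rw [hfact]
    exact W.comp_mem _ _ h1 h2'
  exact ⟨⟨fun h1 X Y X' Y' f g _ hf _ hg => h1 f g hf hg, h21⟩, h23, h32⟩
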